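/- The family $\{T_{jk} : j,k \in \mathbb{Z}\}$ is orthonormal with respect to the inner product $\langle T_1, T_2\rangle_G = \lim_{n\to\infty} \frac{1}{n}\sum_{r=0}^{\lfloor n/\lfloor\sqrt{n}\rfloor\rfloor-1}\sum_{l\in I_{\lfloor\sqrt{n}\rfloor}} \langle T_1(e_{lr}), T_2(e_{lr})\rangle$; that is, $\langle T_{j_1 k_1}, T_{j_2 k_2}\rangle_G = \delta_{j_1 j_2}\delta_{k_1 k_2}$. -/

import Mathlib

open Filter Finset MeasureTheory
open scoped ENNReal

noncomputable section

/-- The index set `I = (0,1] ∩ ℚ`. -/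
abbrev Iq : Type := {q : ℚ // 0 < q ∧ q ≤ 1}

/-- The Hilbert space `ℋ² = ⊕_{l ∈ I} H²[-π,π]`, realized via the orthonormal basis
`{e_{lk} : l ∈ I, k ∈ ℕ}` as `ℓ²(I × ℕ)`. -/
abbrev H2 : Type := lp (fun _ : Iq × ℕ => ℂ) 2

/-- The basis vector `e_{lk}` of `ℋ²` (zero if `l ∉ (0,1]`). -/
def basisVec (l : ℚ) (k : ℕ) : H2 :=
  if h : 0 < l ∧ l ≤ 1 then lp.single 2 ((⟨l, h⟩ : Iq), k) (1 : ℂ) else 0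

/-- Index set for `Bₙ = {e_{lr} : r = 0,…,⌊n/⌊√n⌋⌋-1, l ∈ I_{⌊√n⌋}}`:
pairs `(p, r)` with `1 ≤ p ≤ ⌊√n⌋` and `r < ⌊n/⌊√n⌋⌋`, where `l = p/⌊√n⌋`. -/
def Bfin (n : ℕ) : Finset (ℕ × ℕ) :=
  (Finset.Icc 1 (Nat.sqrt n)) ×ˢ (Finset.range (n / Nat.sqrt n))

/-- The basis vector of `Bₙ` indexed by `(p, r)`, namely `e_{p/⌊√n⌋, r}`. -/
def bvec (n : ℕ) (pr : ℕ × ℕ) : H2 :=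
  basisVec ((pr.1 : ℚ) / (Nat.sqrt n : ℚ)) pr.2

/-- `∑_{e ∈ C} ‖Te‖²` for a subset `C` of the index set of `Bₙ`. -/
def sumSq (T : H2 → H2) (n : ℕ) (C : Finset (ℕ × ℕ)) : ℝ :=
  ∑ pr ∈ C, ‖T (bvec n pr)‖ ^ 2

/-- The seminorm `Q(T) = inf { limsup_n (1/√n)(∑_{e ∈ Cₙ} ‖Te‖²)^{1/2} }`, the infimum
over all decompositions `Bₙ = Cₙ ⊔ Dₙ` with `#Dₙ = o(n)`, valued in `ℝ≥0∞`. -/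
def QQ (T : H2 → H2) : ℝ≥0∞ :=
  ⨅ (C : ℕ → Finset (ℕ × ℕ)) (_ : ∀ n, C n ⊆ Bfin n)
    (_ : Tendsto (fun n => ((Bfin n \ C n).card : ℝ) / n) atTop (nhds 0)),
    Filter.limsup (fun n => ENNReal.ofReal (Real.sqrt (sumSq T n (C n) / n))) atTop

/-- `T` acts like the operator `T_{jk}`:
`T(e_{lr}) = e^{2πijl} e_{l,r+k}` when `r + k ≥ 0`, and `0` otherwise. -/
def IsTjk (T : H2 → H2) (j k : ℤ) : Prop :=
  ∀ (l : ℚ) (r : ℕ), T (basisVec l r) =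
    if 0 ≤ (r : ℤ) + k then
      Complex.exp (2 * Real.pi * Complex.I * (j : ℂ) * (l : ℂ)) • basisVec l ((r : ℤ) + k).toNat
    else 0


open Complex in
private lemma inner_bv (l : ℚ) (hl : 0 < l ∧ l ≤ 1) (a b : ℕ) :
    (inner ℂ (basisVec l a) (basisVec l b) : ℂ) = if a = b then 1 else 0 := by
  rw [basisVec, basisVec, dif_pos hl, dif_pos hl, lp.inner_single_left, lp.single_apply]
  simp [Prod.ext_iff, eq_comm, Pi.single_apply]

private lemma term_eq (j1 k1 j2 k2 : ℤ) (T1 T2 : H2 → H2)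
    (h1 : IsTjk T1 j1 k1) (h2 : IsTjk T2 j2 k2)
    (l : ℚ) (hl : 0 < l ∧ l ≤ 1) (r : ℕ) :
    (inner ℂ (T1 (basisVec l r)) (T2 (basisVec l r)) : ℂ) =
      if k1 = k2 ∧ 0 ≤ (r : ℤ) + k1 then
        Complex.exp (2 * Real.pi * Complex.I * ((j2 : ℂ) - (j1 : ℂ)) * (l : ℂ)) else 0 := by
  rw [h1 l r, h2 l r]
  by_cases hr1 : 0 ≤ (r : ℤ) + k1
  · by_cases hr2 : 0 ≤ (r : ℤ) + k2
    · rw [if_pos hr1, if_pos hr2, inner_smul_left, inner_smul_right, inner_bv l hl]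
      by_cases hk : k1 = k2
      · rw [if_pos (by omega), if_pos ⟨hk, hr1⟩, mul_one, ← Complex.exp_conj,
          ← Complex.exp_add]
        congr 1
        simp only [map_mul, Complex.conj_I, Complex.conj_ofReal, map_intCast, map_ratCast,
          map_ofNat]
        ring
      · rw [if_neg (by omega), if_neg (by tauto), mul_zero, mul_zero]
    · rw [if_pos hr1, if_neg hr2, inner_zero_right, if_neg (by omega)]
  · rw [if_neg hr1, inner_zero_left, if_neg (by tauto)]

private lemma hl_of_mem {n p : ℕ} (hp : p ∈ Finset.Icc 1 (Nat.sqrt n)) :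
    0 < (p : ℚ) / (Nat.sqrt n : ℚ) ∧ (p : ℚ) / (Nat.sqrt n : ℚ) ≤ 1 := by
  rw [Finset.mem_Icc] at hp
  have hm : (0 : ℚ) < (Nat.sqrt n : ℚ) := by exact_mod_cast (by omega : 0 < Nat.sqrt n)
  exact ⟨div_pos (by exact_mod_cast (by omega : 0 < p)) hm,
    (div_le_one hm).2 (by exact_mod_cast hp.2)⟩

private lemma key_sum (j1 j2 k : ℤ) (T1 T2 : H2 → H2)
    (h1 : IsTjk T1 j1 k) (h2 : IsTjk T2 j2 k) (n : ℕ) :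
    ∑ pr ∈ Bfin n, (inner ℂ (T1 (bvec n pr)) (T2 (bvec n pr)) : ℂ) =
      (((n / Nat.sqrt n - (-k).toNat : ℕ) : ℂ)) *
        ∑ p ∈ Finset.Icc 1 (Nat.sqrt n),
          Complex.exp (2 * Real.pi * Complex.I * ((j2 : ℂ) - (j1 : ℂ)) *
            (((p : ℚ) / (Nat.sqrt n : ℚ) : ℚ) : ℂ)) := by
  classical
  rw [Bfin, Finset.sum_product, Finset.mul_sum]
  refine Finset.sum_congr rfl fun p hp => ?_
  have hl := hl_of_mem hp
  calc ∑ r ∈ Finset.range (n / Nat.sqrt n),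
        (inner ℂ (T1 (bvec n (p, r))) (T2 (bvec n (p, r))) : ℂ)
      = ∑ r ∈ Finset.range (n / Nat.sqrt n),
          if 0 ≤ (r : ℤ) + k then
            Complex.exp (2 * Real.pi * Complex.I * ((j2 : ℂ) - (j1 : ℂ)) *
              (((p : ℚ) / (Nat.sqrt n : ℚ) : ℚ) : ℂ)) else 0 := by
        refine Finset.sum_congr rfl fun r _ => ?_
        rw [bvec]
        rw [term_eq j1 k j2 k T1 T2 h1 h2 _ hl r]
        simp
    _ = _ := by
        rw [← Finset.sum_filter, Finset.sum_const, nsmul_eq_mul]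
        congr 2
        have h : (Finset.range (n / Nat.sqrt n)).filter (fun r : ℕ => 0 ≤ (r : ℤ) + k) =
            Finset.Ico (-k).toNat (n / Nat.sqrt n) := by
          ext r
          simp only [Finset.mem_filter, Finset.mem_range, Finset.mem_Ico]
          omega
        rw [h, Nat.card_Ico]

private lemma sqrt_tendsto : Tendsto (fun n : ℕ => Nat.sqrt n) atTop atTop :=
  tendsto_atTop_atTop.mpr fun b => ⟨b * b, fun n hn => Nat.le_sqrt.mpr hn⟩

private lemma real_lim (a : ℕ) :
    Tendsto (fun n : ℕ => ((Nat.sqrt n * (n / Nat.sqrt n - a) : ℕ) : ℝ) / n) atTop (nhds 1) := by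
  have hsqR : Tendsto (fun n : ℕ => (Nat.sqrt n : ℝ)) atTop atTop :=
    tendsto_natCast_atTop_atTop.comp sqrt_tendsto
  have hg : Tendsto (fun n : ℕ => 1 - ((1 + a : ℕ) : ℝ) / (Nat.sqrt n : ℝ)) atTop (nhds 1) := by
    have h0 := tendsto_const_nhds (x := ((1 + a : ℕ) : ℝ)) (f := atTop (α := ℕ)) |>.div_atTop hsqR
    simpa using tendsto_const_nhds.sub h0
  refine tendsto_of_tendsto_of_tendsto_of_le_of_le' hg tendsto_const_nhds ?_ ?_
  · filter_upwards [sqrt_tendsto.eventually_ge_atTop 1, eventually_ge_atTop 1] with n hm hn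
    set m := Nat.sqrt n with hmdef
    set N := n / m with hNdef
    have e1 : m * N + n % m = n := Nat.div_add_mod n m
    have e2 : n % m < m := Nat.mod_lt _ (by omega)
    have e3 : m * N ≤ m * (N - a) + m * a := by
      rw [← Nat.mul_add]; exact Nat.mul_le_mul_left _ (by omega)
    have e4 : m * (1 + a) = m + m * a := by ring
    have hnat : n < m * (N - a) + m * (1 + a) := by omega
    have hmm : m * m ≤ n := Nat.sqrt_le n
    have hmr : (1 : ℝ) ≤ (m : ℝ) := by exact_mod_cast hm
    have hnr : (1 : ℝ) ≤ (n : ℝ) := by exact_mod_cast hn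
    have hmmr : (m : ℝ) * m ≤ n := by exact_mod_cast hmm
    have hnatr : (n : ℝ) ≤ ((m * (N - a) : ℕ) : ℝ) + (m : ℝ) * ((1 + a : ℕ) : ℝ) := by
      push_cast
      exact_mod_cast (by exact_mod_cast hnat.le :
        (n : ℝ) ≤ ((m * (N - a) + m * (1 + a) : ℕ) : ℝ))
    have hc1 : (1 : ℝ) ≤ ((1 + a : ℕ) : ℝ) := by exact_mod_cast Nat.le_add_right 1 a
    set c : ℝ := ((1 + a : ℕ) : ℝ)
    set K : ℝ := ((m * (N - a) : ℕ) : ℝ)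
    rw [le_div_iff₀ (by linarith : (0 : ℝ) < (n : ℝ))]
    have h5 : c * (m : ℝ) ≤ c / (m : ℝ) * (n : ℝ) := by
      rw [div_mul_eq_mul_div, le_div_iff₀ (by linarith : (0 : ℝ) < (m : ℝ))]
      nlinarith
    nlinarith [h5, hnatr]
  · filter_upwards [eventually_ge_atTop 1] with n hn
    set m := Nat.sqrt n
    set N := n / m
    have e1 : m * N + n % m = n := Nat.div_add_mod n m
    have hK : m * (N - a) ≤ n := le_trans (Nat.mul_le_mul_left _ (Nat.sub_le _ _)) (by omega)
    rw [div_le_one (by exact_mod_cast hn : (0 : ℝ) < (n : ℝ))]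
    exact_mod_cast hK

private lemma sum_exp_zero (d : ℤ) (hd : d ≠ 0) (m : ℕ) (hm : d.natAbs < m) :
    ∑ p ∈ Finset.Icc 1 m,
      Complex.exp (2 * Real.pi * Complex.I * (d : ℂ) * (((p : ℚ) / (m : ℚ) : ℚ) : ℂ)) = 0 := by
  have hm0 : (m : ℂ) ≠ 0 := Nat.cast_ne_zero.mpr (by omega)
  set ζ : ℂ := Complex.exp (2 * Real.pi * Complex.I * (d : ℂ) / (m : ℂ)) with hζ
  have hexp : ∀ p : ℕ,
      Complex.exp (2 * Real.pi * Complex.I * (d : ℂ) * (((p : ℚ) / (m : ℚ) : ℚ) : ℂ)) = ζ ^ p := by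
    intro p
    rw [hζ, ← Complex.exp_nat_mul]
    congr 1
    push_cast
    ring
  have hζm : ζ ^ m = 1 := by
    rw [hζ, ← Complex.exp_nat_mul]
    have h : (m : ℂ) * (2 * Real.pi * Complex.I * (d : ℂ) / (m : ℂ)) =
        (d : ℂ) * (2 * Real.pi * Complex.I) := by
      field_simp
    rw [h, Complex.exp_int_mul_two_pi_mul_I]
  have h2pi : (2 * (Real.pi : ℂ) * Complex.I) ≠ 0 :=
    mul_ne_zero (mul_ne_zero two_ne_zero (Complex.ofReal_ne_zero.mpr Real.pi_ne_zero))
      Complex.I_ne_zero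
  have hζ1 : ζ ≠ 1 := by
    intro h
    obtain ⟨nn, hnn⟩ := Complex.exp_eq_one_iff.mp h
    have hd2 : (2 * (Real.pi : ℂ) * Complex.I) * (d : ℂ) =
        (2 * (Real.pi : ℂ) * Complex.I) * ((nn : ℂ) * (m : ℂ)) := by
      field_simp at hnn
      linear_combination (2 * (Real.pi : ℂ) * Complex.I) * hnn
    have hcast : (d : ℂ) = ((nn * m : ℤ) : ℂ) := by
      push_cast
      exact mul_left_cancel₀ h2pi hd2
    have heq : d = nn * m := by exact_mod_cast hcast
    have h2 : nn ≠ 0 := by rintro rfl; simp at heq; exact hd heq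
    have h1 : d.natAbs = nn.natAbs * m := by rw [heq, Int.natAbs_mul]; simp
    have h3 : 1 ≤ nn.natAbs := Int.natAbs_pos.mpr h2
    have h4 : m ≤ nn.natAbs * m := Nat.le_mul_of_pos_left m (by omega)
    omega
  simp_rw [hexp]
  rw [show Finset.Icc 1 m = Finset.Ico 1 (m + 1) from (Finset.Ico_add_one_right_eq_Icc 1 m).symm,
    geom_sum_Ico hζ1 (by omega), pow_succ, hζm, one_mul, pow_one, sub_self, zero_div]

/-- The family `{T_{jk}}` is orthonormal for the inner product
`⟨T₁,T₂⟩_G = lim_n (1/n) ∑_{e ∈ Bₙ} ⟨T₁e, T₂e⟩`: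
the limit equals `1` if `(j₁,k₁) = (j₂,k₂)` and `0` otherwise. -/
theorem Tjk_orthonormal (j1 k1 j2 k2 : ℤ) (T1 T2 : H2 → H2)
    (h1 : IsTjk T1 j1 k1) (h2 : IsTjk T2 j2 k2) :
    Filter.Tendsto
      (fun n : ℕ => (1 / (n : ℂ)) * ∑ pr ∈ Bfin n,
        (inner ℂ (T1 (bvec n pr)) (T2 (bvec n pr)) : ℂ))
      atTop (nhds (if j1 = j2 ∧ k1 = k2 then 1 else 0)) :=  by
  by_cases hk : k1 = k2
  · subst hk
    by_cases hj : j1 = j2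
    · subst hj
      rw [if_pos ⟨rfl, rfl⟩]
      have heq : (fun n : ℕ => (1 / (n : ℂ)) * ∑ pr ∈ Bfin n,
            (inner ℂ (T1 (bvec n pr)) (T2 (bvec n pr)) : ℂ))
          = fun n : ℕ =>
            ((((Nat.sqrt n * (n / Nat.sqrt n - (-k1).toNat) : ℕ) : ℝ) / n : ℝ) : ℂ) := by
        funext n
        rw [key_sum j1 j1 k1 T1 T2 h1 h2 n]
        have hS : ∑ p ∈ Finset.Icc 1 (Nat.sqrt n),
            Complex.exp (2 * Real.pi * Complex.I * ((j1 : ℂ) - (j1 : ℂ)) *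
              (((p : ℚ) / (Nat.sqrt n : ℚ) : ℚ) : ℂ)) = (Nat.sqrt n : ℂ) := by
          simp
        rw [hS]
        push_cast
        ring
      rw [heq]
      have h := (Complex.continuous_ofReal.tendsto 1).comp (real_lim (-k1).toNat)
      simpa [Function.comp_def] using h
    · rw [if_neg (by tauto)]
      have hev : ∀ᶠ n : ℕ in atTop, (1 / (n : ℂ)) * ∑ pr ∈ Bfin n,
          (inner ℂ (T1 (bvec n pr)) (T2 (bvec n pr)) : ℂ) = 0 := by
        filter_upwards [sqrt_tendsto.eventually_gt_atTop (j2 - j1).natAbs] with n hn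
        rw [key_sum j1 j2 k1 T1 T2 h1 h2 n]
        have hS := sum_exp_zero (j2 - j1) (by omega) (Nat.sqrt n) hn
        rw [show ((j2 - j1 : ℤ) : ℂ) = (j2 : ℂ) - (j1 : ℂ) by push_cast; ring] at hS
        rw [hS, mul_zero, mul_zero]
      exact Filter.Tendsto.congr' (Filter.EventuallyEq.symm hev) tendsto_const_nhds
  · rw [if_neg (by tauto)]
    have hz : ∀ n : ℕ, ∑ pr ∈ Bfin n,
        (inner ℂ (T1 (bvec n pr)) (T2 (bvec n pr)) : ℂ) = 0 := by
      intro n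
      refine Finset.sum_eq_zero fun pr hpr => ?_
      rw [Bfin, Finset.mem_product] at hpr
      rw [bvec, term_eq j1 k1 j2 k2 T1 T2 h1 h2 _ (hl_of_mem hpr.1), if_neg (by tauto)]
    simp only [hz, mul_zero]
    exact tendsto_const_nhds
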